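/- Let A ∈ ℝ^{n×n}, B ∈ ℝ^{n×m}, K ∈ ℝ^{m×n}, let q_e > 0 with Q_e = q_e I, and let P_e ∈ ℝ^{n×n} be symmetric positive definite satisfying ‖(A+BK)x‖²_{P_e} + ‖x‖²_{Q_e} ≤ ‖x‖²_{P_e} for all x ∈ ℝ^n. Let x^i_0,…,x^i_N and x^j_0,…,x^j_N be two trajectories of x_{k+1} = A x_k + B u_k with input sequences u^i and u^j, and define the coupling cost J_e = ∑_{k=0}^{N−1} ‖x^i_k − x^j_k‖²_{Q_e} + ‖x^i_N − x^j_N‖²_{P_e}. Let the shifted candidate trajectories start at x^i_1 and x^j_1 with inputs (u^i_1,…,u^i_{N−1}, K x^i_N) and (u^j_1,…,u^j_{N−1}, K x^j_N). Then the coupling cost of the shifted pair satisfies J_e(shifted) ≤ J_e − ‖x^i_0 − x^j_0‖²_{Q_e}. -/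

import Mathlib

open Matrix

/-- State trajectory of the discrete-time linear system `x(k+1) = A x(k) + B u(k)`. -/
def traj {n m : ℕ} (A : Matrix (Fin n) (Fin n) ℝ) (B : Matrix (Fin n) (Fin m) ℝ)
    (x0 : Fin n → ℝ) (u : ℕ → Fin m → ℝ) : ℕ → Fin n → ℝ
  | 0 => x0
  | k + 1 => A.mulVec (traj A B x0 u k) + B.mulVec (u k)

/-- Quadratic form `‖x‖²_P = xᵀ P x`. -/
def quadForm {d : ℕ} (P : Matrix (Fin d) (Fin d) ℝ) (x : Fin d → ℝ) : ℝ :=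
  dotProduct x (P.mulVec x)

/-- Coupling cost between two trajectories over a horizon of length `N`:
`J_e = ∑_{k=0}^{N-1} ‖x^i_k - x^j_k‖²_{Q_e} + ‖x^i_N - x^j_N‖²_{P_e}`. -/
def couplingCost {n m : ℕ} (A : Matrix (Fin n) (Fin n) ℝ) (B : Matrix (Fin n) (Fin m) ℝ)
    (Qe Pe : Matrix (Fin n) (Fin n) ℝ) (N : ℕ)
    (xi0 xj0 : Fin n → ℝ) (ui uj : ℕ → Fin m → ℝ) : ℝ :=
  (∑ k ∈ Finset.range N, quadForm Qe (traj A B xi0 ui k - traj A B xj0 uj k)) +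
    quadForm Pe (traj A B xi0 ui N - traj A B xj0 uj N)

/-- Decrease of the coupling cost along the shifted candidate pair: if
`‖(A+BK)x‖²_{P_e} + ‖x‖²_{Q_e} ≤ ‖x‖²_{P_e}` for all `x`, then the coupling cost of
the shifted trajectories satisfies `J_e(shifted) ≤ J_e - ‖x^i_0 - x^j_0‖²_{Q_e}`. -/
theorem shifted_coupling_cost_decrease {n m N : ℕ} (hN : 1 ≤ N)
    (A : Matrix (Fin n) (Fin n) ℝ) (B : Matrix (Fin n) (Fin m) ℝ)
    (K : Matrix (Fin m) (Fin n) ℝ)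
    (qe : ℝ) (hqe : 0 < qe) (Qe Pe : Matrix (Fin n) (Fin n) ℝ)
    (hQe : Qe = qe • (1 : Matrix (Fin n) (Fin n) ℝ))
    (hPe : Pe.PosDef)
    (hLyap : ∀ x : Fin n → ℝ,
      quadForm Pe (A.mulVec x + B.mulVec (K.mulVec x)) + quadForm Qe x ≤ quadForm Pe x)
    (xi0 xj0 : Fin n → ℝ) (ui uj : ℕ → Fin m → ℝ) :
    couplingCost A B Qe Pe N (traj A B xi0 ui 1) (traj A B xj0 uj 1)
        (fun k => if k + 1 < N then ui (k + 1) else K.mulVec (traj A B xi0 ui N))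
        (fun k => if k + 1 < N then uj (k + 1) else K.mulVec (traj A B xj0 uj N)) ≤
      couplingCost A B Qe Pe N xi0 xj0 ui uj - quadForm Qe (xi0 - xj0) := by

  classical
  set ui' := (fun k => if k + 1 < N then ui (k + 1) else K.mulVec (traj A B xi0 ui N)) with hui'
  set uj' := (fun k => if k + 1 < N then uj (k + 1) else K.mulVec (traj A B xj0 uj N)) with huj'
  -- shifted trajectories agree with original shifted by one
  have hsh : ∀ (x0 : Fin n → ℝ) (u : ℕ → Fin m → ℝ) (u' : ℕ → Fin m → ℝ),
      (∀ k, k + 1 < N → u' k = u (k + 1)) →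
      ∀ k, k + 1 ≤ N → traj A B (traj A B x0 u 1) u' k = traj A B x0 u (k + 1) := by
    intro x0 u u' hu k
    induction k with
    | zero => intro _; rfl
    | succ k ih =>
      intro hk
      have h1 : k + 1 ≤ N := by omega
      have h2 : k + 1 < N := by omega
      rw [show traj A B (traj A B x0 u 1) u' (k + 1)
            = A.mulVec (traj A B (traj A B x0 u 1) u' k) + B.mulVec (u' k) from rfl,
          ih h1, hu k h2]
      rfl
  have hiu : ∀ k, k + 1 < N → ui' k = ui (k + 1) := by intro k hk; simp [hui', hk]
  have hju : ∀ k, k + 1 < N → uj' k = uj (k + 1) := by intro k hk; simp [huj', hk]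
  have hshi := hsh xi0 ui ui' hiu
  have hshj := hsh xj0 uj uj' hju
  obtain ⟨M, rfl⟩ : ∃ M, N = M + 1 := ⟨N - 1, by omega⟩
  -- terminal states of shifted trajectories
  have hlast : ¬ (M + 1 < M + 1) := by omega
  have htermi : traj A B (traj A B xi0 ui 1) ui' (M + 1)
      = A.mulVec (traj A B xi0 ui (M + 1)) + B.mulVec (K.mulVec (traj A B xi0 ui (M + 1))) := by
    rw [show traj A B (traj A B xi0 ui 1) ui' (M + 1)
          = A.mulVec (traj A B (traj A B xi0 ui 1) ui' M) + B.mulVec (ui' M) from rfl,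
        hshi M (by omega), show ui' M = K.mulVec (traj A B xi0 ui (M + 1)) from if_neg hlast]
  have htermj : traj A B (traj A B xj0 uj 1) uj' (M + 1)
      = A.mulVec (traj A B xj0 uj (M + 1)) + B.mulVec (K.mulVec (traj A B xj0 uj (M + 1))) := by
    rw [show traj A B (traj A B xj0 uj 1) uj' (M + 1)
          = A.mulVec (traj A B (traj A B xj0 uj 1) uj' M) + B.mulVec (uj' M) from rfl,
        hshj M (by omega), show uj' M = K.mulVec (traj A B xj0 uj (M + 1)) from if_neg hlast]
  set e : ℕ → Fin n → ℝ := fun k => traj A B xi0 ui k - traj A B xj0 uj k with he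
  have hterm : traj A B (traj A B xi0 ui 1) ui' (M + 1) - traj A B (traj A B xj0 uj 1) uj' (M + 1)
      = A.mulVec (e (M + 1)) + B.mulVec (K.mulVec (e (M + 1))) := by
    rw [htermi, htermj]
    simp only [he, Matrix.mulVec_sub]
    abel
  have hstage : ∀ k ∈ Finset.range (M + 1),
      quadForm Qe (traj A B (traj A B xi0 ui 1) ui' k - traj A B (traj A B xj0 uj 1) uj' k)
        = quadForm Qe (e (k + 1)) := by
    intro k hk
    rw [Finset.mem_range] at hk
    rw [hshi k (by omega), hshj k (by omega)]
  unfold couplingCost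
  rw [Finset.sum_congr rfl hstage, hterm]
  have hsum : ∑ k ∈ Finset.range (M + 1), quadForm Qe (e (k + 1))
      = ∑ k ∈ Finset.range (M + 1), quadForm Qe (e k) + quadForm Qe (e (M + 1)) - quadForm Qe (e 0) := by
    have h1 := Finset.sum_range_succ' (fun k => quadForm Qe (e k)) (M + 1)
    have h2 := Finset.sum_range_succ (fun k => quadForm Qe (e k)) (M + 1)
    linarith [h1, h2]
  rw [hsum]
  have hL := hLyap (e (M + 1))
  have he0 : e 0 = xi0 - xj0 := rfl
  rw [he0] at *
  show _ ≤ (∑ k ∈ Finset.range (M + 1), quadForm Qe (e k)) + quadForm Pe (e (M + 1)) - _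
  linarith
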